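/- Let K ⊆ ℝ^n be a nonempty compact convex set and let c ∈ ℝ^n. Let M = { y ∈ K : ⟨c, y⟩ ≤ ⟨c, z⟩ for all z ∈ K } be the set of minimizers of the linear functional ⟨c, ·⟩ over K, and suppose y₀ ∈ M satisfies y₀ ≤_lex y for every y ∈ M, where ≤_lex denotes the lexicographic order on ℝ^n. Then y₀ is an extreme point of K. -/

import Mathlib

open Matrix

private lemma aux_lex (n : ℕ) (y₀ x₁ x₂ : Fin n → ℝ) (a b : ℝ) (ha : 0 < a) (hb : 0 < b)
    (hab : a + b = 1) (hsum : ∀ i, a * x₁ i + b * x₂ i = y₀ i)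
    (h1 : x₁ = y₀ ∨ ∃ i : Fin n, (∀ j < i, y₀ j = x₁ j) ∧ y₀ i < x₁ i)
    (h2 : x₂ = y₀ ∨ ∃ i : Fin n, (∀ j < i, y₀ j = x₂ j) ∧ y₀ i < x₂ i) :
    x₁ = y₀ := by
  rcases h1 with h | ⟨i, hji, hi⟩
  · exact h
  exfalso
  have hx2i : x₂ i < y₀ i := by
    by_contra h
    push_neg at h
    have h1' := mul_lt_mul_of_pos_left hi ha
    have h2' := mul_le_mul_of_nonneg_left h hb.le
    have h3' := hsum i
    have hy : a * y₀ i + b * y₀ i = y₀ i := by rw [← add_mul, hab, one_mul]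
    linarith
  have hprev : ∀ j < i, x₂ j = y₀ j := by
    intro j hj
    have h1j := hji j hj
    have h3' := hsum j
    have hy : a * y₀ j + b * y₀ j = y₀ j := by rw [← add_mul, hab, one_mul]
    have : b * x₂ j = b * y₀ j := by
      have h1j' : a * x₁ j = a * y₀ j := by rw [← h1j]
      linarith
    exact mul_left_cancel₀ hb.ne' this
  rcases h2 with h | ⟨k, hjk, hk⟩
  · rw [h] at hx2i; exact lt_irrefl _ hx2i
  rcases lt_trichotomy k i with hki | hki | hki
  · have := hprev k hki; linarith
  · subst hki; linarith
  · have := hjk i hki; linarith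

/-- The lexicographically smallest minimizer of a linear functional over a nonempty
compact convex set is an extreme point of that set (the "lexicographically smallest
optimizer is a vertex" property used in Theorem 1). -/
theorem stmt_15 (n : ℕ) (K : Set (Fin n → ℝ)) (hne : K.Nonempty)
    (hcomp : IsCompact K) (hconv : Convex ℝ K) (c : Fin n → ℝ)
    (M : Set (Fin n → ℝ)) (hM : M = {y ∈ K | ∀ z ∈ K, c ⬝ᵥ y ≤ c ⬝ᵥ z})
    (y₀ : Fin n → ℝ) (hy₀ : y₀ ∈ M)
    (hlex : ∀ y ∈ M, y = y₀ ∨ ∃ i : Fin n, (∀ j < i, y₀ j = y j) ∧ y₀ i < y i) :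
    y₀ ∈ Set.extremePoints ℝ K := by
  subst hM
  obtain ⟨hy₀K, hmin⟩ := hy₀
  refine ⟨hy₀K, ?_⟩
  rintro x₁ hx₁ x₂ hx₂ ⟨a, b, ha, hb, hab, hseg⟩
  have hdot : c ⬝ᵥ y₀ = a * (c ⬝ᵥ x₁) + b * (c ⬝ᵥ x₂) := by
    rw [← hseg]
    simp [dotProduct_add, dotProduct_smul, smul_eq_mul]
  have h1le := hmin x₁ hx₁
  have h2le := hmin x₂ hx₂
  have h1eq : c ⬝ᵥ x₁ = c ⬝ᵥ y₀ := by
    by_contra h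
    have hlt : c ⬝ᵥ y₀ < c ⬝ᵥ x₁ := lt_of_le_of_ne h1le (Ne.symm h)
    have hy : a * (c ⬝ᵥ y₀) + b * (c ⬝ᵥ y₀) = c ⬝ᵥ y₀ := by rw [← add_mul, hab, one_mul]
    linarith [mul_lt_mul_of_pos_left hlt ha, mul_le_mul_of_nonneg_left h2le hb.le]
  have h2eq : c ⬝ᵥ x₂ = c ⬝ᵥ y₀ := by
    by_contra h
    have hlt : c ⬝ᵥ y₀ < c ⬝ᵥ x₂ := lt_of_le_of_ne h2le (Ne.symm h)
    have hy : a * (c ⬝ᵥ y₀) + b * (c ⬝ᵥ y₀) = c ⬝ᵥ y₀ := by rw [← add_mul, hab, one_mul]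
    linarith [mul_lt_mul_of_pos_left hlt hb, mul_le_mul_of_nonneg_left h1le ha.le]
  have hx₁M : x₁ = y₀ ∨ ∃ i : Fin n, (∀ j < i, y₀ j = x₁ j) ∧ y₀ i < x₁ i := by
    refine hlex x₁ ⟨hx₁, fun z hz => ?_⟩
    rw [h1eq]; exact hmin z hz
  have hx₂M : x₂ = y₀ ∨ ∃ i : Fin n, (∀ j < i, y₀ j = x₂ j) ∧ y₀ i < x₂ i := by
    refine hlex x₂ ⟨hx₂, fun z hz => ?_⟩
    rw [h2eq]; exact hmin z hz
  have hsum : ∀ i, a * x₁ i + b * x₂ i = y₀ i := fun i => congrFun hseg i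
  have hsum' : ∀ i, b * x₂ i + a * x₁ i = y₀ i := fun i => by rw [add_comm]; exact hsum i
  have hab' : b + a = 1 := by linarith
  exact aux_lex n y₀ x₁ x₂ a b ha hb hab hsum hx₁M hx₂M
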